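/- If G is an upper embeddable connected graph and G̲ is a weak minor of G (obtained from G by a sequence of edge contractions), then G̲ is upper embeddable. -/

import Mathlib

/-- A finite multigraph: loops and parallel edges allowed.  Each edge has an
ordered pair of endpoints (the order is irrelevant for all graph notions). -/
structure Multigraph where
  V : Type
  E : Type
  fintypeV : Fintype V
  fintypeE : Fintype E
  decEqV : DecidableEq V
  decEqE : DecidableEq E
  ends : E → V × V

attribute [instance] Multigraph.fintypeV Multigraph.fintypeE Multigraph.decEqV Multigraph.decEqE

namespace Multigraph

variable (G : Multigraph)

/-- Adjacency inside the vertex set `S`, using only edges from `F`. -/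
def AdjW (S : Set G.V) (F : Set G.E) (u v : G.V) : Prop :=
  u ∈ S ∧ v ∈ S ∧ ∃ e ∈ F, G.ends e = (u, v) ∨ G.ends e = (v, u)

/-- Reachability inside the vertex set `S`, using only edges from `F`. -/
def ReachW (S : Set G.V) (F : Set G.E) : G.V → G.V → Prop :=
  Relation.ReflTransGen (G.AdjW S F)

/-- The multigraph is connected. -/
def Connected : Prop := ∀ u v : G.V, G.ReachW Set.univ Set.univ u v

def Incident (e : G.E) (v : G.V) : Prop := (G.ends e).1 = v ∨ (G.ends e).2 = v

/-- `T` is (the edge set of) a spanning tree: the edges of `T` connect all the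
vertices, and every edge of `T` is a bridge of `(V, T)`. -/
def IsSpanningTree (T : Set G.E) : Prop :=
  (∀ u v : G.V, G.ReachW Set.univ T u v) ∧
  ∀ e ∈ T, ¬ G.ReachW Set.univ (T \ {e}) (G.ends e).1 (G.ends e).2

/-- The deficiency `ξ(G,T)`: the number of connected components of `G - E(T)`
containing an odd number of edges. -/
noncomputable def xiT (T : Set G.E) : ℕ :=
  Nat.card {c : Quot (G.ReachW Set.univ Tᶜ) //
    Odd (Nat.card {e : G.E // e ∉ T ∧ Quot.mk (G.ReachW Set.univ Tᶜ) (G.ends e).1 = c})}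

/-- The deficiency `ξ(G)`: the minimum of `ξ(G,T)` over all spanning trees. -/
noncomputable def xi : ℕ := sInf {n : ℕ | ∃ T : Set G.E, G.IsSpanningTree T ∧ G.xiT T = n}

/-- The Betti number (cycle rank) `β(G) = |E| - |V| + 1`. -/
def betti : ℕ := Fintype.card G.E + 1 - Fintype.card G.V

/-- The vertex at which a dart (an edge together with a chosen end) is based. -/
def dartV (d : G.E × Bool) : G.V := if d.2 then (G.ends d.1).1 else (G.ends d.1).2

/-- Degree of a vertex: the number of edge-ends at it (loops count twice). -/
noncomputable def degree (v : G.V) : ℕ := Nat.card {d : G.E × Bool // G.dartV d = v}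

/-- A rotation system: a permutation of the darts preserving the base vertex
(its cycles at each vertex give the local rotations of a cellular embedding). -/
def IsRotation (ρ : Equiv.Perm (G.E × Bool)) : Prop := ∀ d, G.dartV (ρ d) = G.dartV d

/-- The number of faces of the cellular embedding determined by a rotation
system: the number of orbits of face-tracing. -/
noncomputable def numFaces (ρ : Equiv.Perm (G.E × Bool)) : ℕ :=
  Nat.card (Quot (fun x y : G.E × Bool => y = ρ (x.1, !x.2)))

/-- The maximum (orientable) genus: the largest `g` such that some rotation
system yields, via Euler's formula `|V| - |E| + F = 2 - 2g`, an embedding of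
genus `g`. -/
noncomputable def maxGenus : ℕ :=
  sSup {g : ℕ | ∃ ρ : Equiv.Perm (G.E × Bool), G.IsRotation ρ ∧
    (Fintype.card G.V : ℤ) - Fintype.card G.E + G.numFaces ρ = 2 - 2 * g}

/-- `G` is upper embeddable: `γ_M(G) = ⌊β(G)/2⌋`. -/
def UpperEmbeddable : Prop := G.maxGenus = G.betti / 2

/-- The set of neighbors of `v` (so `v ∈ N(v)` iff there is a loop at `v`). -/
def neighborSet (v : G.V) : Set G.V :=
  {u | ∃ e : G.E, G.ends e = (v, u) ∨ G.ends e = (u, v)}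

/-- The induced subgraph on `S` is connected. -/
def ConnectedOn (S : Set G.V) : Prop :=
  ∀ u ∈ S, ∀ v ∈ S, G.ReachW S Set.univ u v

/-- `e` is a cut-edge (bridge) of the subgraph induced on `S`. -/
def IsCutEdgeOn (S : Set G.V) (e : G.E) : Prop :=
  (G.ends e).1 ∈ S ∧ (G.ends e).2 ∈ S ∧
  ¬ G.ReachW S {e}ᶜ (G.ends e).1 (G.ends e).2

/-- Auxiliary map for vertex splitting: where an end of an edge goes.
`Sum.inl v` plays the role of `v'`, and `Sum.inr ()` the role of `v''`. -/
def splitEnd (v u : G.V) (b : Bool) : G.V ⊕ Unit :=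
  if u = v then (if b then Sum.inl v else Sum.inr ()) else Sum.inl u

/-- The graph obtained from `G` by splitting `v` into two adjacent vertices
`v' = Sum.inl v` and `v'' = Sum.inr ()`, joined by the new splitting edge
`none`; the assignment `a` decides, for each end of each former edge at `v`,
whether it is attached to `v'` (`true`) or to `v''` (`false`). -/
def split (v : G.V) (a : G.E → Bool × Bool) : Multigraph where
  V := G.V ⊕ Unit
  E := Option G.E
  fintypeV := inferInstance
  fintypeE := inferInstance
  decEqV := inferInstance
  decEqE := inferInstance
  ends := fun e? => match e? with
    | none => (Sum.inl v, Sum.inr ())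
    | some e => (G.splitEnd v (G.ends e).1 (a e).1, G.splitEnd v (G.ends e).2 (a e).2)

/-- The vertex set of the `v`-splitting subgraph `G*_spl(v)`: `v'`, `v''`, and
all their neighbors in the split graph. -/
def splitSet (v : G.V) (a : G.E → Bool × Bool) : Set (G.split v a).V :=
  {x | x = Sum.inl v ∨ x = Sum.inr () ∨
    x ∈ (G.split v a).neighborSet (Sum.inl v) ∨ x ∈ (G.split v a).neighborSet (Sum.inr ())}

/-- Auxiliary map for edge contraction: the image of a vertex. -/
def contractEnd (e₀ : G.E) (u : G.V) :
    {x : G.V // x = (G.ends e₀).1 ∨ x ≠ (G.ends e₀).2} :=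
  if h : u = (G.ends e₀).2 then ⟨(G.ends e₀).1, Or.inl rfl⟩ else ⟨u, Or.inr h⟩

/-- The graph obtained from `G` by contracting the edge `e₀` (identifying its
two endpoints and deleting `e₀`; parallel edges and loops are retained). -/
def contract (e₀ : G.E) : Multigraph where
  V := {u : G.V // u = (G.ends e₀).1 ∨ u ≠ (G.ends e₀).2}
  E := {e : G.E // e ≠ e₀}
  fintypeV := inferInstance
  fintypeE := inferInstance
  decEqV := inferInstance
  decEqE := inferInstance
  ends := fun e => (G.contractEnd e₀ (G.ends e.1).1, G.contractEnd e₀ (G.ends e.1).2)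

/-- The graph obtained from `G` by subdividing the edge `e₀` with one new
vertex of degree two. -/
def subdivide (e₀ : G.E) : Multigraph where
  V := G.V ⊕ Unit
  E := {e : G.E // e ≠ e₀} ⊕ Bool
  fintypeV := inferInstance
  fintypeE := inferInstance
  decEqV := inferInstance
  decEqE := inferInstance
  ends := fun e => match e with
    | Sum.inl e => (Sum.inl (G.ends e.1).1, Sum.inl (G.ends e.1).2)
    | Sum.inr true => (Sum.inl (G.ends e₀).1, Sum.inr ())
    | Sum.inr false => (Sum.inr (), Sum.inl (G.ends e₀).2)

end Multigraph

/-- An isomorphism of multigraphs. -/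
structure Multigraph.Isom (G H : Multigraph) where
  vEquiv : G.V ≃ H.V
  eEquiv : G.E ≃ H.E
  ends_eq : ∀ e : G.E,
    H.ends (eEquiv e) = (vEquiv (G.ends e).1, vEquiv (G.ends e).2) ∨
    H.ends (eEquiv e) = (vEquiv (G.ends e).2, vEquiv (G.ends e).1)

namespace Multigraph

/-- `Y` is obtained from `X` by contracting one non-loop edge. -/
def ContractStep (X Y : Multigraph) : Prop :=
  ∃ e₀ : X.E, (X.ends e₀).1 ≠ (X.ends e₀).2 ∧ Nonempty (Isom Y (X.contract e₀))

/-- `H` is a weak minor of `G`: obtained from `G` by a (possibly empty)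
sequence of edge contractions (up to isomorphism). -/
def IsWeakMinor (H G : Multigraph) : Prop :=
  ∃ X : Multigraph, Relation.ReflTransGen ContractStep G X ∧ Nonempty (Isom H X)

/-- `Y` is obtained from `X` by subdividing one edge. -/
def SubdivideStep (X Y : Multigraph) : Prop :=
  ∃ e₀ : X.E, Nonempty (Isom Y (X.subdivide e₀))

/-- `H` is a subdivision of `G`. -/
def IsSubdivision (H G : Multigraph) : Prop :=
  ∃ X : Multigraph, Relation.ReflTransGen SubdivideStep G X ∧ Nonempty (Isom H X)

/-- The bouquet of circles `B n`: a single vertex with `n` loops. -/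
def bouquet (n : ℕ) : Multigraph where
  V := Unit
  E := Fin n
  fintypeV := inferInstance
  fintypeE := inferInstance
  decEqV := inferInstance
  decEqE := inferInstance
  ends := fun _ => ((), ())

end Multigraph



namespace UEAux
open Relation

variable {α : Type*}

/-- the one-step relation of a function -/
def frel (f : α → α) : α → α → Prop := fun x y => y = f x

lemma eqvGen_mem {f : α → α} {p : α → Prop} (hinv : ∀ x, p x ↔ p (f x))
    {x y} (h : EqvGen (frel f) x y) : p x ↔ p y := by
  induction h with
  | rel a b hab => rw [hab]; exact hinv a
  | refl a => exact Iff.rfl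
  | symm a b _ ih => exact ih.symm
  | trans a b c _ _ ih1 ih2 => exact ih1.trans ih2

/-- restriction of a function to an invariant subset -/
def restrict (f : α → α) {p : α → Prop} (hinv : ∀ x, p x ↔ p (f x)) :
    {z // p z} → {z // p z} := fun a => ⟨f a.1, (hinv a.1).mp a.2⟩

lemma eqvGen_subtype {f : α → α} {p : α → Prop} (hinv : ∀ x, p x ↔ p (f x))
    {x y} (h : EqvGen (frel f) x y) :
    ∀ (hx : p x) (hy : p y), EqvGen (frel (restrict f hinv)) ⟨x, hx⟩ ⟨y, hy⟩ := by
  induction h with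
  | rel a b hab => intro hx hy; exact EqvGen.rel _ _ (Subtype.ext hab)
  | refl a => intro hx hy; exact EqvGen.refl _
  | symm a b _ ih => intro hx hy; exact EqvGen.symm _ _ (ih hy hx)
  | trans a b c hab _ ih1 ih2 =>
      intro hx hy
      have hb : p b := (eqvGen_mem hinv hab).mp hx
      exact EqvGen.trans _ _ _ (ih1 hx hb) (ih2 hb hy)

lemma eqvGen_map {β : Type*} (e : α ≃ β) {f : α → α} {f' : β → β}
    (hcomm : ∀ z, e (f z) = f' (e z)) {x y} (h : EqvGen (frel f) x y) :
    EqvGen (frel f') (e x) (e y) := by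
  induction h with
  | rel a b hab => exact EqvGen.rel _ _ (show e b = f' (e a) by rw [hab, hcomm])
  | refl a => exact EqvGen.refl _
  | symm a b _ ih => exact EqvGen.symm _ _ ih
  | trans a b c _ _ ih1 ih2 => exact EqvGen.trans _ _ _ ih1 ih2

lemma eqvGen_pow [Fintype α] [DecidableEq α] {π : Equiv.Perm α} {x y : α}
    (h : EqvGen (frel (π : α → α)) x y) : ∃ i : ℕ, (π ^ i) x = y := by
  induction h with
  | rel a b hab => exact ⟨1, by rw [pow_one]; exact (id hab : b = π a).symm⟩
  | refl a => exact ⟨0, by simp⟩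
  | symm a b _ ih =>
      obtain ⟨i, hi⟩ := ih
      refine ⟨i * (orderOf π - 1), ?_⟩
      have hord : 1 ≤ orderOf π := orderOf_pos π
      have hmul : i * (orderOf π - 1) + i = orderOf π * i := by
        obtain ⟨m, hm⟩ := Nat.exists_eq_add_of_le hord
        rw [hm, Nat.add_sub_cancel_left]; ring
      have h1 : (π ^ (orderOf π * i)) a = a := by
        rw [pow_mul, pow_orderOf_eq_one, one_pow]; rfl
      calc (π ^ (i * (orderOf π - 1))) b
          = (π ^ (i * (orderOf π - 1))) ((π ^ i) a) := by rw [hi]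
        _ = (π ^ (i * (orderOf π - 1) + i)) a := by
            rw [pow_add]; rfl
        _ = a := by rw [hmul]; exact h1
  | trans a b c _ _ ih1 ih2 =>
      obtain ⟨i, hi⟩ := ih1; obtain ⟨j, hj⟩ := ih2
      refine ⟨j + i, ?_⟩
      rw [pow_add]
      show (π ^ j) ((π ^ i) a) = c
      rw [hi, hj]

end UEAux

namespace UEAux
open Relation

variable {α : Type*}

section Split
variable [Fintype α] [DecidableEq α]

/-- Multiplying a single-cycle permutation by a transposition gives exactly 2 orbits. -/
lemma card_quot_swap_trans (π : Equiv.Perm α)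
    (hone : ∀ x y : α, EqvGen (frel (π : α → α)) x y) {c d : α} (hcd : c ≠ d) :
    Nat.card (Quot (frel (fun x => π (Equiv.swap c d x)))) = 2 := by
  classical
  set π' : α → α := fun x => π (Equiv.swap c d x) with hπ'
  have hex : ∃ i : ℕ, 0 < i ∧ (π ^ i) c = d := by
    obtain ⟨i, hi⟩ := eqvGen_pow (hone c d)
    match i, hi with
    | 0, hi => exact absurd hi hcd
    | (i+1), hi => exact ⟨i+1, Nat.succ_pos i, hi⟩
  set k := Nat.find hex with hkdef
  have hk : 0 < k ∧ (π ^ k) c = d := Nat.find_spec hex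
  have hmin : ∀ m, m < k → ¬(0 < m ∧ (π ^ m) c = d) := fun m hm => Nat.find_min hex hm
  -- basic facts
  have fact2 : ∀ m, 0 < m → m < k → (π ^ m) c ≠ c ∧ (π ^ m) c ≠ d := by
    intro m h0 hmk
    constructor
    · intro hc
      have h1 : (π ^ (k - m)) ((π ^ m) c) = d := by
        rw [← Equiv.Perm.mul_apply, ← pow_add, Nat.sub_add_cancel (le_of_lt hmk)]
        exact hk.2
      rw [hc] at h1
      exact hmin (k - m) (by omega) ⟨by omega, h1⟩
    · intro hd
      exact hmin m hmk ⟨h0, hd⟩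
  set B : α → Prop := fun x => ∃ m, 0 < m ∧ m ≤ k ∧ (π ^ m) c = x with hBdef
  have hBc : ¬ B c := by
    rintro ⟨m, h0, hmk, hval⟩
    rcases eq_or_lt_of_le hmk with h | h
    · rw [h] at hval; rw [hval] at hk; exact hcd hk.2
    · exact (fact2 m h0 h).1 hval
  have hBd : B d := ⟨k, hk.1, le_refl k, hk.2⟩
  have hswap_c : Equiv.swap c d c = d := Equiv.swap_apply_left c d
  have hswap_d : Equiv.swap c d d = c := Equiv.swap_apply_right c d
  have hinvB : ∀ x, B x ↔ B (π' x) := by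
    intro x
    constructor
    · rintro ⟨m, h0, hmk, hval⟩
      by_cases hxd : x = d
      · refine ⟨1, one_pos, hk.1, ?_⟩
        rw [pow_one, hπ']
        show π c = π (Equiv.swap c d x)
        rw [hxd, hswap_d]
      · have hmk' : m < k := by
          rcases eq_or_lt_of_le hmk with h | h
          · exfalso; apply hxd; rw [← hval, h]; exact hk.2
          · exact h
        have hxc : x ≠ c := fun h => hBc (h ▸ ⟨m, h0, hmk, hval⟩)
        refine ⟨m + 1, Nat.succ_pos m, by omega, ?_⟩
        have : π' x = π x := by
          rw [hπ']; show π (Equiv.swap c d x) = π x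
          rw [Equiv.swap_apply_of_ne_of_ne hxc hxd]
        rw [this, ← hval, pow_succ']
        rfl
    · rintro ⟨m, h0, hmk, hval⟩
      have hval' : (π ^ (m-1)) c = Equiv.swap c d x := by
        apply π.injective
        have : π ((π ^ (m-1)) c) = (π ^ m) c := by
          conv_rhs => rw [show m = m - 1 + 1 by omega]
          rw [pow_succ']
          rfl
        rw [this, hval]
      by_cases hm1 : m = 1
      · have : Equiv.swap c d x = c := by rw [← hval', hm1]; simp
        have hx : x = d := by
          have := congrArg (Equiv.swap c d) this
          rwa [Equiv.swap_apply_self, hswap_c] at this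
        rw [hx]; exact hBd
      · have h0' : 0 < m - 1 := by omega
        have hmk' : m - 1 < k := by omega
        have hne := fact2 (m-1) h0' hmk'
        have hx : x = (π ^ (m-1)) c := by
          have : Equiv.swap c d x = (π ^ (m-1)) c := hval'.symm
          have := congrArg (Equiv.swap c d) this
          rwa [Equiv.swap_apply_self,
            Equiv.swap_apply_of_ne_of_ne hne.1 hne.2] at this
        exact ⟨m - 1, h0', by omega, hx.symm⟩
  -- all elements of B are equivalent to d
  have hBrel : ∀ j m, m + j = k → 0 < m → EqvGen (frel π') ((π ^ m) c) d := by
    intro j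
    induction j with
    | zero =>
        intro m hm h0
        have : m = k := by omega
        rw [this, hk.2]
        exact EqvGen.refl d
    | succ j ih =>
        intro m hm h0
        have hmk : m < k := by omega
        have hne := fact2 m h0 hmk
        have hstep : (π ^ (m+1)) c = π' ((π ^ m) c) := by
          rw [hπ']
          show (π ^ (m+1)) c = π (Equiv.swap c d ((π ^ m) c))
          rw [Equiv.swap_apply_of_ne_of_ne hne.1 hne.2, pow_succ']
          rfl
        exact EqvGen.trans _ _ _ (EqvGen.rel _ _ hstep) (ih (m+1) (by omega) (by omega))
  -- classification
  have hclass : ∀ x, B x ∨ EqvGen (frel π') x c := by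
    have key : ∀ i, B ((π ^ i) c) ∨ EqvGen (frel π') ((π ^ i) c) c := by
      intro i
      induction i with
      | zero => right; rw [pow_zero]; exact EqvGen.refl c
      | succ i ih =>
          have hsucc : (π ^ (i+1)) c = π ((π ^ i) c) := by rw [pow_succ']; rfl
          by_cases hB : B ((π ^ i) c)
          · obtain ⟨m, h0, hmk, hval⟩ := hB
            by_cases hd : (π ^ i) c = d
            · right
              have : (π ^ (i+1)) c = π' c := by
                rw [hsucc, hd, hπ']
                show π d = π (Equiv.swap c d c)
                rw [hswap_c]
              rw [this]
              exact EqvGen.symm _ _ (EqvGen.rel _ _ rfl)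
            · left
              have hmk' : m < k := by
                rcases eq_or_lt_of_le hmk with h | h
                · exfalso; apply hd; rw [← hval, h]; exact hk.2
                · exact h
              exact ⟨m+1, Nat.succ_pos m, by omega, by rw [pow_succ']; show π ((π^m) c) = _ ; rw [hval, hsucc]⟩
          · rcases ih with ih | ih
            · exact absurd ih hB
            · by_cases hc : (π ^ i) c = c
              · left
                exact ⟨1, one_pos, hk.1, by rw [pow_one, hsucc, hc]⟩
              · right
                have hd : (π ^ i) c ≠ d := fun h => hB (h ▸ hBd)
                have hstep : (π ^ (i+1)) c = π' ((π ^ i) c) := by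
                  rw [hsucc, hπ']
                  show π ((π^i) c) = π (Equiv.swap c d ((π^i) c))
                  rw [Equiv.swap_apply_of_ne_of_ne hc hd]
                rw [hstep]
                exact EqvGen.trans _ _ _ (EqvGen.symm _ _ (EqvGen.rel _ _ rfl)) ih
    intro x
    obtain ⟨i, hi⟩ := eqvGen_pow (hone c x)
    rw [← hi]
    exact key i
  -- the B-side relation
  have hBrel' : ∀ x, B x → EqvGen (frel π') x d := by
    rintro x ⟨m, h0, hmk, hval⟩
    rw [← hval]
    exact hBrel (k - m) m (by omega) h0
  -- soundness of lifting B
  have hsound : ∀ a b : α, frel π' a b → B a = B b := by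
    intro a b hab
    have : b = π' a := hab
    rw [this]
    exact propext (hinvB a)
  -- build the equivalence with Bool
  let F : Quot (frel π') → Bool := Quot.lift (fun x => decide (B x))
    (fun a b hab => by show decide (B a) = decide (B b); rw [hsound a b hab])
  let I : Bool → Quot (frel π') := fun b => if b then Quot.mk _ d else Quot.mk _ c
  have hFd : F (Quot.mk _ d) = true := by simp [F, hBd]
  have hFc : F (Quot.mk _ c) = false := by simp [F, hBc]
  have e : Quot (frel π') ≃ Bool := by
    refine ⟨F, I, ?_, ?_⟩
    · intro q
      induction q using Quot.ind with
      | _ x =>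
        by_cases hB : B x
        · have : F (Quot.mk _ x) = true := by simp [F, hB]
          rw [this]
          show Quot.mk _ d = Quot.mk _ x
          exact (Quot.eqvGen_sound (hBrel' x hB)).symm
        · have : F (Quot.mk _ x) = false := by simp [F, hB]
          rw [this]
          show Quot.mk _ c = Quot.mk _ x
          rcases hclass x with h | h
          · exact absurd h hB
          · exact (Quot.eqvGen_sound h).symm
    · intro b
      cases b
      · exact hFc
      · exact hFd
  rw [Nat.card_congr e, Nat.card_eq_fintype_card, Fintype.card_bool]

end Split

section Skip

variable (φ : α → α) (p : α → Prop) [DecidablePred p]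
variable (F1 : ∀ x, ¬p x → ¬p (φ x) → p (φ (φ x)))

/-- skipping over (at most two consecutive) bad elements -/
def skip2 : {x // p x} → {x // p x} := fun a =>
  if h1 : p (φ a.1) then ⟨φ a.1, h1⟩
  else if h2 : p (φ (φ a.1)) then ⟨φ (φ a.1), h2⟩
  else ⟨φ (φ (φ a.1)), F1 (φ a.1) h1 h2⟩

/-- normal form: first good element along the forward orbit -/
def norm2 : α → {x // p x} := fun x =>
  if h : p x then ⟨x, h⟩
  else if h1 : p (φ x) then ⟨φ x, h1⟩
  else ⟨φ (φ x), F1 x h h1⟩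

lemma card_quot_skip2 :
    Nat.card (Quot (frel (skip2 φ p F1))) = Nat.card (Quot (frel φ)) := by
  have chain1 : ∀ x : α, EqvGen (frel φ) x (φ x) := fun x => EqvGen.rel _ _ rfl
  have chain2 : ∀ x : α, EqvGen (frel φ) x (φ (φ x)) :=
    fun x => EqvGen.trans _ _ _ (chain1 x) (chain1 (φ x))
  have chain3 : ∀ x : α, EqvGen (frel φ) x (φ (φ (φ x))) :=
    fun x => EqvGen.trans _ _ _ (chain2 x) (chain1 (φ (φ x)))
  have hval : ∀ a : {x // p x}, (skip2 φ p F1 a).1 = φ a.1 ∨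
      (skip2 φ p F1 a).1 = φ (φ a.1) ∨ (skip2 φ p F1 a).1 = φ (φ (φ a.1)) := by
    intro a
    unfold skip2
    split_ifs <;> simp
  have hnval : ∀ x : α, (norm2 φ p F1 x).1 = x ∨ (norm2 φ p F1 x).1 = φ x ∨
      (norm2 φ p F1 x).1 = φ (φ x) := by
    intro x
    unfold norm2
    split_ifs <;> simp
  -- forward map soundness
  have hfwd : ∀ (a b : {x // p x}), frel (skip2 φ p F1) a b →
      Quot.mk (frel φ) a.1 = Quot.mk (frel φ) b.1 := by
    rintro a b (hab : b = skip2 φ p F1 a)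
    apply Quot.eqvGen_sound
    rw [hab]
    rcases hval a with h | h | h <;> rw [h]
    · exact chain1 a.1
    · exact chain2 a.1
    · exact chain3 a.1
  -- backward map
  have bsound : ∀ x y : α, frel φ x y →
      Quot.mk (frel (skip2 φ p F1)) (norm2 φ p F1 x) = Quot.mk _ (norm2 φ p F1 y) := by
    rintro x y (hxy : y = φ x)
    subst hxy
    by_cases hx : p x
    · have hn : norm2 φ p F1 x = ⟨x, hx⟩ := by unfold norm2; rw [dif_pos hx]
      by_cases hy : p (φ x)
      · -- one step
        apply Quot.sound
        show norm2 φ p F1 (φ x) = skip2 φ p F1 (norm2 φ p F1 x)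
        rw [hn]
        simp [norm2, skip2, hy]
      · apply Quot.sound
        show norm2 φ p F1 (φ x) = skip2 φ p F1 (norm2 φ p F1 x)
        rw [hn]
        simp [norm2, skip2, hy]
    · by_cases hy : p (φ x)
      · -- norm x = ⟨φ x⟩ = norm y
        have h1 : norm2 φ p F1 x = ⟨φ x, hy⟩ := by
          unfold norm2; rw [dif_neg hx, dif_pos hy]
        have h2 : norm2 φ p F1 (φ x) = ⟨φ x, hy⟩ := by
          unfold norm2; rw [dif_pos hy]
        rw [h1, h2]
      · have hgood : p (φ (φ x)) := F1 x hx hy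
        have h1 : norm2 φ p F1 x = ⟨φ (φ x), hgood⟩ := by
          unfold norm2; rw [dif_neg hx, dif_neg hy]
        have h2 : norm2 φ p F1 (φ x) = ⟨φ (φ x), hgood⟩ := by
          unfold norm2; rw [dif_neg hy, dif_pos hgood]
        rw [h1, h2]
  have e : Quot (frel (skip2 φ p F1)) ≃ Quot (frel φ) :=
    { toFun := Quot.lift (fun a => Quot.mk (frel φ) a.1) hfwd
      invFun := Quot.lift (fun x => Quot.mk (frel (skip2 φ p F1)) (norm2 φ p F1 x)) bsound
      left_inv := by
        intro q
        induction q using Quot.ind with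
        | _ a =>
          show Quot.mk _ (norm2 φ p F1 a.1) = Quot.mk _ a
          have h : norm2 φ p F1 a.1 = a := by
            unfold norm2; rw [dif_pos a.2]
          rw [h]
      right_inv := by
        intro q
        induction q using Quot.ind with
        | _ x =>
          show Quot.mk _ (norm2 φ p F1 x).1 = Quot.mk _ x
          apply Quot.eqvGen_sound
          apply EqvGen.symm
          rcases hnval x with h | h | h <;> rw [h]
          · exact EqvGen.refl x
          · exact chain1 x
          · exact chain2 x }
  exact Nat.card_congr e

end Skip

end UEAux

namespace Multigraph
open UEAux Relation

/- ### small helpers -/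

private lemma swap_map_eq {α β : Type*} [DecidableEq α] (f : α → β) {a b : α}
    (h : f a = f b) (x : α) : f (Equiv.swap a b x) = f x := by
  rcases eq_or_ne x a with hxa | hxa
  · rw [hxa, Equiv.swap_apply_left]; exact h.symm
  · rcases eq_or_ne x b with hxb | hxb
    · rw [hxb, Equiv.swap_apply_right]; exact h
    · rw [Equiv.swap_apply_of_ne_of_ne hxa hxb]

private lemma eq_of_card_two {A : Type*} (h2 : Nat.card A = 2) {a b c : A}
    (hac : a ≠ c) (hbc : b ≠ c) : a = b := by
  classical
  have hfin : Finite A := by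
    have hpos : 0 < Nat.card A := by omega
    exact (Nat.card_pos_iff.mp hpos).2
  by_contra hab
  haveI := hfin
  haveI := Fintype.ofFinite A
  rw [Nat.card_eq_fintype_card] at h2
  have h3 : ({a, b, c} : Finset A).card = 3 := by
    rw [Finset.card_insert_of_notMem (by simp [hab, hac]),
      Finset.card_insert_of_notMem (by simp [hbc]), Finset.card_singleton]
  have h4 := Finset.card_le_univ ({a, b, c} : Finset A)
  rw [h3, h2] at h4
  omega

section Basic

variable (G : Multigraph)

@[simp] lemma dartV_true (e : G.E) : G.dartV (e, true) = (G.ends e).1 := rfl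
@[simp] lemma dartV_false (e : G.E) : G.dartV (e, false) = (G.ends e).2 := rfl

/-- The genus set whose supremum is the maximum genus. -/
def genusSet : Set ℕ := {g : ℕ | ∃ ρ : Equiv.Perm (G.E × Bool), G.IsRotation ρ ∧
    (Fintype.card G.V : ℤ) - Fintype.card G.E + G.numFaces ρ = 2 - 2 * g}

lemma maxGenus_def : G.maxGenus = sSup G.genusSet := rfl

lemma genusSet_bound {g : ℕ} (hg : g ∈ G.genusSet) : g ≤ Fintype.card G.E + 2 := by
  obtain ⟨ρ, -, heq⟩ := hg
  have h1 : (0:ℤ) ≤ (Fintype.card G.V : ℤ) := by positivity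
  have h2 : (0:ℤ) ≤ (G.numFaces ρ : ℤ) := by positivity
  omega

lemma genusSet_bddAbove : BddAbove G.genusSet :=
  ⟨Fintype.card G.E + 2, fun _ hg => G.genusSet_bound hg⟩

lemma numFaces_pos (ρ : Equiv.Perm (G.E × Bool)) (he : Nonempty G.E) :
    1 ≤ G.numFaces ρ := by
  haveI : Nonempty (Quot (fun x y : G.E × Bool => y = ρ (x.1, !x.2))) :=
    ⟨Quot.mk _ (he.some, true)⟩
  haveI : Finite (Quot (fun x y : G.E × Bool => y = ρ (x.1, !x.2))) :=
    Finite.of_surjective (Quot.mk _) (fun q => Quot.exists_rep q)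
  exact Nat.card_pos

lemma numFaces_zero (ρ : Equiv.Perm (G.E × Bool)) (he : IsEmpty G.E) :
    G.numFaces ρ = 0 := by
  haveI : IsEmpty (Quot (fun x y : G.E × Bool => y = ρ (x.1, !x.2))) :=
    ⟨fun q => Quot.ind (β := fun _ => False) (fun x => he.false x.1) q⟩
  exact Nat.card_of_isEmpty

lemma genus_le_betti_div_two {g : ℕ} (hV : Nonempty G.V) (hg : g ∈ G.genusSet) :
    g ≤ G.betti / 2 := by
  obtain ⟨ρ, -, heq⟩ := hg
  have hV1 : 1 ≤ Fintype.card G.V := Fintype.card_pos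
  have hbetti : G.betti = Fintype.card G.E + 1 - Fintype.card G.V := rfl
  rcases isEmpty_or_nonempty G.E with hE | hE
  · have hF := G.numFaces_zero ρ hE
    have hE0 : Fintype.card G.E = 0 := Fintype.card_eq_zero
    omega
  · have hF : 1 ≤ G.numFaces ρ := G.numFaces_pos ρ hE
    omega

lemma maxGenus_le_betti_div_two (hV : Nonempty G.V) : G.maxGenus ≤ G.betti / 2 := by
  rw [maxGenus_def]
  rcases Set.eq_empty_or_nonempty G.genusSet with h | h
  · rw [h, csSup_empty]
    exact Nat.zero_le _
  · exact csSup_le h (fun g hg => G.genus_le_betti_div_two hV hg)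

end Basic

section Contract

variable (G : Multigraph) (e₀ : G.E)

lemma card_contract_V (hne : (G.ends e₀).1 ≠ (G.ends e₀).2) :
    Fintype.card (G.contract e₀).V = Fintype.card G.V - 1 := by
  classical
  have e : (G.contract e₀).V ≃ {u : G.V // ¬ (u = (G.ends e₀).2)} :=
    Equiv.subtypeEquivRight (by
      intro u
      constructor
      · rintro (h | h)
        · rw [h]; exact hne
        · exact h
      · intro h; exact Or.inr h)
  rw [Fintype.card_congr e, Fintype.card_subtype_compl, Fintype.card_subtype_eq]

lemma card_contract_E : Fintype.card (G.contract e₀).E = Fintype.card G.E - 1 := by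
  classical
  have e : (G.contract e₀).E ≃ {e : G.E // ¬ (e = e₀)} :=
    Equiv.subtypeEquivRight (fun _ => Iff.rfl)
  rw [Fintype.card_congr e, Fintype.card_subtype_compl, Fintype.card_subtype_eq]

lemma betti_contract (hne : (G.ends e₀).1 ≠ (G.ends e₀).2) :
    (G.contract e₀).betti = G.betti := by
  have h1 := G.card_contract_V e₀ hne
  have h2 := G.card_contract_E e₀
  have hV1 : 1 ≤ Fintype.card G.V := @Fintype.card_pos _ _ ⟨(G.ends e₀).1⟩
  have hE1 : 1 ≤ Fintype.card G.E := @Fintype.card_pos _ _ ⟨e₀⟩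
  unfold betti
  omega

lemma contractEnd_ends_eq (hne : (G.ends e₀).1 ≠ (G.ends e₀).2) :
    G.contractEnd e₀ (G.ends e₀).1 = G.contractEnd e₀ (G.ends e₀).2 := by
  unfold contractEnd
  rw [dif_neg hne, dif_pos rfl]

lemma contract_dartV (d : (G.contract e₀).E × Bool) :
    (G.contract e₀).dartV d = G.contractEnd e₀ (G.dartV (d.1.1, d.2)) := by
  rcases d with ⟨⟨e, he⟩, b⟩
  cases b <;> rfl

/-- identification of the darts of the contraction with good darts of `G` -/
def contractDartEquiv : ((G.contract e₀).E × Bool) ≃ {d : G.E × Bool // d.1 ≠ e₀} where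
  toFun d := ⟨(d.1.1, d.2), d.1.2⟩
  invFun d := (⟨d.1.1, d.2⟩, d.1.2)
  left_inv d := rfl
  right_inv d := rfl

end Contract

section Construction

variable (G : Multigraph) (e₀ : G.E)

/-- In the non-degenerate case, contracting a non-loop edge preserves the face count. -/
lemma contract_rotation_nondeg (hne : (G.ends e₀).1 ≠ (G.ends e₀).2)
    (ρ : Equiv.Perm (G.E × Bool)) (hρ : G.IsRotation ρ)
    (hnd : ¬(ρ (e₀, true) = (e₀, true) ∧ ρ (e₀, false) = (e₀, false))) :
    ∃ ρ' : Equiv.Perm ((G.contract e₀).E × Bool),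
      (G.contract e₀).IsRotation ρ' ∧ (G.contract e₀).numFaces ρ' = G.numFaces ρ := by
  classical
  set d₁ : G.E × Bool := (e₀, true) with hd₁def
  set d₂ : G.E × Bool := (e₀, false) with hd₂def
  have hd12 : d₁ ≠ d₂ := by simp [hd₁def, hd₂def]
  have hKne : G.dartV d₁ ≠ G.dartV d₂ := by simpa [hd₁def, hd₂def] using hne
  have hρ12 : ρ d₁ ≠ d₂ := by
    intro h
    apply hKne
    have h2 := hρ d₁
    rw [h] at h2
    exact h2.symm
  have hρ21 : ρ d₂ ≠ d₁ := by
    intro h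
    apply hKne
    have h2 := hρ d₂
    rw [h] at h2
    exact h2
  -- the bad-dart characterization
  have hbadchar : ∀ x : G.E × Bool, x.1 = e₀ ↔ (x = d₁ ∨ x = d₂) := by
    rintro ⟨e, b⟩
    cases b <;> simp [hd₁def, hd₂def, Prod.ext_iff]
  set p : G.E × Bool → Prop := fun d => d.1 ≠ e₀ with hpdef
  have hp_iff : ∀ x : G.E × Bool, ¬ p x ↔ (x = d₁ ∨ x = d₂) := by
    intro x
    rw [hpdef]
    simp only [ne_eq, not_not]
    exact hbadchar x
  set φf : G.E × Bool → G.E × Bool := fun x => ρ (x.1, !x.2) with hφfdef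
  have hφf_d₁ : φf d₁ = ρ d₂ := rfl
  have hφf_d₂ : φf d₂ = ρ d₁ := rfl
  -- construction of the modified permutation
  set μ : Equiv.Perm (G.E × Bool) := (Equiv.swap d₁ d₂).trans ρ with hμdef
  set ν₁ : Equiv.Perm (G.E × Bool) := (Equiv.swap (μ.symm d₁) d₁).trans μ with hν₁def
  set ν₂ : Equiv.Perm (G.E × Bool) := (Equiv.swap (ν₁.symm d₂) d₂).trans ν₁ with hν₂def
  have hμ_good : ∀ x : G.E × Bool, p x → μ x = ρ x := by
    intro x hx
    rw [hμdef]
    show ρ (Equiv.swap d₁ d₂ x) = ρ x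
    rw [Equiv.swap_apply_of_ne_of_ne (fun h => hx (by rw [h, hd₁def]))
      (fun h => hx (by rw [h, hd₂def]))]
  have hμ_d₁ : μ d₁ = ρ d₂ := by
    rw [hμdef]; show ρ (Equiv.swap d₁ d₂ d₁) = ρ d₂; rw [Equiv.swap_apply_left]
  have hμ_d₂ : μ d₂ = ρ d₁ := by
    rw [hμdef]; show ρ (Equiv.swap d₁ d₂ d₂) = ρ d₁; rw [Equiv.swap_apply_right]
  have hν₁d₁ : ν₁ d₁ = d₁ := by
    rw [hν₁def]
    show μ (Equiv.swap (μ.symm d₁) d₁ d₁) = d₁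
    rw [Equiv.swap_apply_right, Equiv.apply_symm_apply]
  have hν₂d₂ : ν₂ d₂ = d₂ := by
    rw [hν₂def]
    show ν₁ (Equiv.swap (ν₁.symm d₂) d₂ d₂) = d₂
    rw [Equiv.swap_apply_right, Equiv.apply_symm_apply]
  have hν₂d₁ : ν₂ d₁ = d₁ := by
    rw [hν₂def]
    show ν₁ (Equiv.swap (ν₁.symm d₂) d₂ d₁) = d₁
    rw [Equiv.swap_apply_of_ne_of_ne (fun h => hd12 (by
        rw [h] at hν₁d₁ ⊢
        rw [← hν₁d₁, Equiv.apply_symm_apply])) hd12]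
    exact hν₁d₁
  -- the key characterization of ν₂ on good darts
  have vchar : ∀ x : G.E × Bool, p x →
      ν₂ (x.1, !x.2) = (if p (φf x) then φf x
        else if p (φf (φf x)) then φf (φf x) else φf (φf (φf x))) := by
    intro x hx
    have hy : p (x.1, !x.2) := hx
    set y : G.E × Bool := (x.1, !x.2) with hydef
    have hμy : μ y = φf x := by rw [hμ_good y hy, hφfdef]
    have hyne₁ : y ≠ d₁ := fun h => (hp_iff y).mpr (Or.inl h) hy
    have hyne₂ : y ≠ d₂ := fun h => (hp_iff y).mpr (Or.inr h) hy
    by_cases hA : μ y = d₁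
    · -- φf x = d₁
      have hφx : φf x = d₁ := by rw [← hμy, hA]
      have hya : y = μ.symm d₁ := by rw [← hA, Equiv.symm_apply_apply]
      have hν₁y : ν₁ y = μ d₁ := by
        rw [hν₁def]
        show μ (Equiv.swap (μ.symm d₁) d₁ y) = μ d₁
        rw [hya, Equiv.swap_apply_left]
      have hnot1 : ¬ p (φf x) := by rw [hφx]; simp [hpdef, hd₁def]
      by_cases hB : μ d₁ = d₂
      · -- ρ d₂ = d₂ hence ρ d₁ ≠ d₁
        have hρd₂ : ρ d₂ = d₂ := by rw [← hμ_d₁]; exact hB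
        have hρd₁ : ρ d₁ ≠ d₁ := fun h => hnd ⟨h, hρd₂⟩
        have hν₁y' : ν₁ y = d₂ := by rw [hν₁y, hB]
        have hyb : y = ν₁.symm d₂ := by rw [← hν₁y', Equiv.symm_apply_apply]
        have hstep : ν₂ y = ν₁ d₂ := by
          rw [hν₂def]
          show ν₁ (Equiv.swap (ν₁.symm d₂) d₂ y) = ν₁ d₂
          rw [hyb, Equiv.swap_apply_left]
        have hd₂ne : d₂ ≠ μ.symm d₁ := by
          intro h
          apply hρd₁
          have h2 : μ d₂ = d₁ := by rw [h, Equiv.apply_symm_apply]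
          rwa [hμ_d₂] at h2
        have hν₁d₂' : ν₁ d₂ = μ d₂ := by
          rw [hν₁def]
          show μ (Equiv.swap (μ.symm d₁) d₁ d₂) = μ d₂
          rw [Equiv.swap_apply_of_ne_of_ne hd₂ne (Ne.symm hd12)]
        have hval : ν₂ y = ρ d₁ := by rw [hstep, hν₁d₂', hμ_d₂]
        have hnot2 : ¬ p (φf (φf x)) := by
          rw [hφx, hφf_d₁, hρd₂]; simp [hpdef, hd₂def]
        rw [hval, if_neg hnot1, if_neg hnot2, hφx, hφf_d₁, hρd₂, hφf_d₂]
      · -- μ d₁ is good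
        have hgood : p (μ d₁) := by
          intro hcon
          rcases (hbadchar (μ d₁)).mp (not_not.mp (fun hh => hh hcon)) with h | h
          · rw [hμ_d₁] at h; exact hρ21 h
          · exact hB h
        have hν₁yne : ν₁ y ≠ d₂ := by rw [hν₁y]; exact fun h => hB h
        have hynb : y ≠ ν₁.symm d₂ := by
          intro h
          apply hν₁yne
          rw [h, Equiv.apply_symm_apply]
        have hstep : ν₂ y = ν₁ y := by
          rw [hν₂def]
          show ν₁ (Equiv.swap (ν₁.symm d₂) d₂ y) = ν₁ y
          rw [Equiv.swap_apply_of_ne_of_ne hynb hyne₂]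
        have hval : ν₂ y = ρ d₂ := by rw [hstep, hν₁y, hμ_d₁]
        have hgood2 : p (φf (φf x)) := by rw [hφx, hφf_d₁]; rw [hμ_d₁] at hgood; exact hgood
        rw [hval, if_neg hnot1, if_pos hgood2, hφx, hφf_d₁]
    · by_cases hC : μ y = d₂
      · -- φf x = d₂
        have hφx : φf x = d₂ := by rw [← hμy, hC]
        have hnot1 : ¬ p (φf x) := by rw [hφx]; simp [hpdef, hd₂def]
        have hyna : y ≠ μ.symm d₁ := by
          intro h
          apply hA
          rw [h, Equiv.apply_symm_apply]
        have hν₁y : ν₁ y = d₂ := by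
          rw [hν₁def]
          show μ (Equiv.swap (μ.symm d₁) d₁ y) = d₂
          rw [Equiv.swap_apply_of_ne_of_ne hyna hyne₁]
          exact hC
        have hyb : y = ν₁.symm d₂ := by rw [← hν₁y, Equiv.symm_apply_apply]
        have hstep : ν₂ y = ν₁ d₂ := by
          rw [hν₂def]
          show ν₁ (Equiv.swap (ν₁.symm d₂) d₂ y) = ν₁ d₂
          rw [hyb, Equiv.swap_apply_left]
        by_cases hD : μ d₂ = d₁
        · -- ρ d₁ = d₁ (so ρ d₂ ≠ d₂)
          have hρd₁ : ρ d₁ = d₁ := by rw [← hμ_d₂]; exact hD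
          have hd₂a : d₂ = μ.symm d₁ := by rw [← hD, Equiv.symm_apply_apply]
          have hν₁d₂' : ν₁ d₂ = μ d₁ := by
            rw [hν₁def]
            show μ (Equiv.swap (μ.symm d₁) d₁ d₂) = μ d₁
            rw [hd₂a, Equiv.swap_apply_left]
          have hval : ν₂ y = ρ d₂ := by rw [hstep, hν₁d₂', hμ_d₁]
          have hnot2 : ¬ p (φf (φf x)) := by
            rw [hφx, hφf_d₂, hρd₁]; simp [hpdef, hd₁def]
          rw [hval, if_neg hnot1, if_neg hnot2, hφx, hφf_d₂, hρd₁, hφf_d₁]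
        · have hd₂na : d₂ ≠ μ.symm d₁ := by
            intro h
            apply hD
            rw [h, Equiv.apply_symm_apply]
          have hν₁d₂' : ν₁ d₂ = μ d₂ := by
            rw [hν₁def]
            show μ (Equiv.swap (μ.symm d₁) d₁ d₂) = μ d₂
            rw [Equiv.swap_apply_of_ne_of_ne hd₂na (Ne.symm hd12)]
          have hval : ν₂ y = ρ d₁ := by rw [hstep, hν₁d₂', hμ_d₂]
          have hgood2 : p (φf (φf x)) := by
            rw [hφx, hφf_d₂]
            intro hcon
            rcases (hbadchar (ρ d₁)).mp (not_not.mp (fun hh => hh hcon)) with h | h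
            · apply hD; rw [hμ_d₂]; exact h
            · exact hρ12 h
          rw [hval, if_neg hnot1, if_pos hgood2, hφx, hφf_d₂]
      · -- μ y is good
        have hgood : p (μ y) := by
          intro hcon
          rcases (hbadchar (μ y)).mp (not_not.mp (fun hh => hh hcon)) with h | h
          · exact hA h
          · exact hC h
        have hyna : y ≠ μ.symm d₁ := by
          intro h
          apply hA
          rw [h, Equiv.apply_symm_apply]
        have hν₁y : ν₁ y = μ y := by
          rw [hν₁def]
          show μ (Equiv.swap (μ.symm d₁) d₁ y) = μ y
          rw [Equiv.swap_apply_of_ne_of_ne hyna hyne₁]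
        have hynb : y ≠ ν₁.symm d₂ := by
          intro h
          have h2 : ν₁ y = d₂ := by rw [h, Equiv.apply_symm_apply]
          rw [hν₁y] at h2
          exact hC h2
        have hstep : ν₂ y = μ y := by
          rw [hν₂def]
          show ν₁ (Equiv.swap (ν₁.symm d₂) d₂ y) = μ y
          rw [Equiv.swap_apply_of_ne_of_ne hynb hyne₂]
          exact hν₁y
        have hgoodφ : p (φf x) := by rw [← hμy]; exact hgood
        rw [hstep, hμy, if_pos hgoodφ]
  -- goodness is preserved by ν₂
  have good_iff : ∀ x : G.E × Bool, p x ↔ p (ν₂ x) := by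
    intro x
    constructor
    · intro hx hcon
      rcases (hbadchar (ν₂ x)).mp (not_not.mp (fun hh => hh hcon)) with h | h
      · have := ν₂.injective (h.trans hν₂d₁.symm)
        exact (hp_iff x).mpr (Or.inl this) hx
      · have := ν₂.injective (h.trans hν₂d₂.symm)
        exact (hp_iff x).mpr (Or.inr this) hx
    · intro hx hcon
      rcases (hbadchar x).mp (not_not.mp (fun hh => hh hcon)) with h | h
      · rw [h, hν₂d₁] at hx
        exact hx (by rw [hd₁def])
      · rw [h, hν₂d₂] at hx
        exact hx (by rw [hd₂def])
  -- F1 hypothesis for skip2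
  have hF1 : ∀ x : G.E × Bool, ¬ p x → ¬ p (φf x) → p (φf (φf x)) := by
    intro x hx h1
    rcases (hp_iff x).mp hx with h | h
    · subst h
      rw [hφf_d₁] at h1 ⊢
      rcases (hp_iff (ρ d₂)).mp h1 with h2 | h2
      · exact absurd h2 hρ21
      · rw [h2, hφf_d₂]
        intro hcon
        rcases (hbadchar (ρ d₁)).mp (not_not.mp (fun hh => hh hcon)) with h3 | h3
        · exact hnd ⟨h3, h2⟩
        · exact hρ12 h3
    · subst h
      rw [hφf_d₂] at h1 ⊢
      rcases (hp_iff (ρ d₁)).mp h1 with h2 | h2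
      · rw [h2, hφf_d₁]
        intro hcon
        rcases (hbadchar (ρ d₂)).mp (not_not.mp (fun hh => hh hcon)) with h3 | h3
        · exact hρ21 h3
        · exact hnd ⟨h2, h3⟩
      · exact absurd h2 hρ12
  -- the restricted permutation and the rotation on the contraction
  set ρsub : Equiv.Perm {d : G.E × Bool // p d} := ν₂.subtypePerm (fun x => (good_iff x).symm) with hρsubdef
  set τ := G.contractDartEquiv e₀ with hτdef
  set ρ' : Equiv.Perm ((G.contract e₀).E × Bool) := (τ.trans ρsub).trans τ.symm with hρ'def
  have hρ'apply : ∀ d, τ (ρ' d) = ρsub (τ d) := by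
    intro d
    rw [hρ'def]
    show τ (τ.symm (ρsub (τ d))) = ρsub (τ d)
    rw [Equiv.apply_symm_apply]
  -- rotation property
  set K : G.E × Bool → (G.contract e₀).V := fun z => G.contractEnd e₀ (G.dartV z) with hKdef
  have hKρ : ∀ z, K (ρ z) = K z := fun z => congrArg (G.contractEnd e₀) (hρ z)
  have hK12 : K d₁ = K d₂ := by
    rw [hKdef]
    show G.contractEnd e₀ (G.dartV d₁) = G.contractEnd e₀ (G.dartV d₂)
    rw [hd₁def, hd₂def, dartV_true, dartV_false]
    exact G.contractEnd_ends_eq e₀ hne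
  have hKμ : ∀ z, K (μ z) = K z := by
    intro z
    rw [hμdef]
    show K (ρ (Equiv.swap d₁ d₂ z)) = K z
    rw [hKρ]
    exact swap_map_eq K hK12 z
  have hKa : K (μ.symm d₁) = K d₁ := by
    have := hKμ (μ.symm d₁)
    rw [Equiv.apply_symm_apply] at this
    exact this.symm
  have hKν₁ : ∀ z, K (ν₁ z) = K z := by
    intro z
    rw [hν₁def]
    show K (μ (Equiv.swap (μ.symm d₁) d₁ z)) = K z
    rw [hKμ]
    exact swap_map_eq K hKa z
  have hKb : K (ν₁.symm d₂) = K d₂ := by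
    have := hKν₁ (ν₁.symm d₂)
    rw [Equiv.apply_symm_apply] at this
    exact this.symm
  have hKν₂ : ∀ z, K (ν₂ z) = K z := by
    intro z
    rw [hν₂def]
    show K (ν₁ (Equiv.swap (ν₁.symm d₂) d₂ z)) = K z
    rw [hKν₁]
    exact swap_map_eq K hKb z
  refine ⟨ρ', ?_, ?_⟩
  · intro d
    rw [G.contract_dartV e₀ (ρ' d), G.contract_dartV e₀ d]
    have hval : ((ρ' d).1.1, (ρ' d).2) = ν₂ (d.1.1, d.2) :=
      congrArg Subtype.val (hρ'apply d)
    rw [hval]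
    exact hKν₂ (d.1.1, d.2)
  · -- face count
    have hqc : (G.contract e₀).numFaces ρ' =
        Nat.card (Quot (frel (skip2 φf p hF1))) := by
      apply Nat.card_congr
      apply Quot.congr τ
      intro a b
      show (b = ρ' (a.1, !a.2)) ↔ (τ b = skip2 φf p hF1 (τ a))
      have hkey : ρsub (τ ((a.1, !a.2))) = skip2 φf p hF1 (τ a) := by
        apply Subtype.ext
        have h1 : (ρsub (τ (a.1, !a.2))).1 = ν₂ (a.1.1, !a.2) := rfl
        have h2 : (skip2 φf p hF1 (τ a)).1 =
            (if p (φf ((τ a).1)) then φf ((τ a).1)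
              else if p (φf (φf ((τ a).1))) then φf (φf ((τ a).1))
              else φf (φf (φf ((τ a).1)))) := by
          unfold skip2
          split_ifs <;> rfl
        rw [h1, h2]
        exact vchar (a.1.1, a.2) a.1.2
      constructor
      · intro h
        rw [h, ← hkey]
        exact hρ'apply (a.1, !a.2)
      · intro h
        apply τ.injective
        rw [hρ'apply (a.1, !a.2), hkey]
        exact h
    rw [hqc, card_quot_skip2]
    rfl

/-- In the degenerate case (both darts of `e₀` fixed), one face splits into two. -/
lemma contract_rotation_deg (ρ : Equiv.Perm (G.E × Bool)) (hρ : G.IsRotation ρ)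
    (hfix : ρ (e₀, true) = (e₀, true) ∧ ρ (e₀, false) = (e₀, false))
    (hone : ∀ x y : G.E × Bool, x.1 ≠ e₀ → y.1 ≠ e₀ →
      EqvGen (frel (fun z : G.E × Bool => ρ (z.1, !z.2))) x y)
    (hcard : Fintype.card (G.contract e₀).V < Fintype.card ((G.contract e₀).E × Bool)) :
    ∃ ρ' : Equiv.Perm ((G.contract e₀).E × Bool),
      (G.contract e₀).IsRotation ρ' ∧ (G.contract e₀).numFaces ρ' = 2 := by
  classical
  set d₁ : G.E × Bool := (e₀, true) with hd₁def
  set d₂ : G.E × Bool := (e₀, false) with hd₂def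
  have hbadchar : ∀ x : G.E × Bool, x.1 = e₀ ↔ (x = d₁ ∨ x = d₂) := by
    rintro ⟨e, b⟩
    cases b <;> simp [hd₁def, hd₂def, Prod.ext_iff]
  set p : G.E × Bool → Prop := fun d => d.1 ≠ e₀ with hpdef
  set φf : G.E × Bool → G.E × Bool := fun x => ρ (x.1, !x.2) with hφfdef
  have hGoodρ : ∀ x : G.E × Bool, p x ↔ p (ρ x) := by
    intro x
    constructor
    · intro hx hcon
      rcases (hbadchar (ρ x)).mp (not_not.mp (fun hh => hh hcon)) with h | h
      · have := ρ.injective (h.trans hfix.1.symm)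
        exact hx (by rw [this, hd₁def])
      · have := ρ.injective (h.trans hfix.2.symm)
        exact hx (by rw [this, hd₂def])
    · intro hx hcon
      rcases (hbadchar x).mp (not_not.mp (fun hh => hh hcon)) with h | h
      · rw [h] at hx
        rw [hd₁def] at hx
        rw [hfix.1] at hx
        exact hx rfl
      · rw [h] at hx
        rw [hd₂def] at hx
        rw [hfix.2] at hx
        exact hx rfl
  have hGoodφ : ∀ x : G.E × Bool, p x ↔ p (φf x) := by
    intro x
    have h1 : p x ↔ p (x.1, !x.2) := Iff.rfl
    rw [h1]
    exact hGoodρ (x.1, !x.2)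
  set τ := G.contractDartEquiv e₀ with hτdef
  set ρsub : Equiv.Perm {d : G.E × Bool // p d} := ρ.subtypePerm (fun x => (hGoodρ x).symm) with hρsubdef
  set ρbase : Equiv.Perm ((G.contract e₀).E × Bool) := (τ.trans ρsub).trans τ.symm
    with hρbasedef
  have hρbase_apply : ∀ d, τ (ρbase d) = ρsub (τ d) := by
    intro d
    rw [hρbasedef]
    show τ (τ.symm (ρsub (τ d))) = ρsub (τ d)
    rw [Equiv.apply_symm_apply]
  set opD : Equiv.Perm ((G.contract e₀).E × Bool) :=
    ⟨fun d => (d.1, !d.2), fun d => (d.1, !d.2), fun d => by simp, fun d => by simp⟩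
    with hopDdef
  set πE : Equiv.Perm ((G.contract e₀).E × Bool) := opD.trans ρbase with hπEdef
  -- single-class property on the contraction darts
  have honesub : ∀ a b : {d : G.E × Bool // p d},
      EqvGen (frel (restrict φf hGoodφ)) a b := by
    intro a b
    have h := hone a.1 b.1 a.2 b.2
    have h2 := eqvGen_subtype hGoodφ h a.2 b.2
    exact h2
  have hcomm : ∀ z : {d : G.E × Bool // p d},
      τ.symm (restrict φf hGoodφ z) = πE (τ.symm z) := by
    intro z
    rfl
  have hone'' : ∀ x y : ((G.contract e₀).E × Bool), EqvGen (frel (πE : _ → _)) x y := by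
    intro x y
    have h := eqvGen_map τ.symm hcomm (honesub (τ x) (τ y))
    simpa using h
  -- pigeonhole: two distinct darts based at the same vertex
  obtain ⟨a, b, hab, hVab⟩ :=
    Fintype.exists_ne_map_eq_of_card_lt ((G.contract e₀).dartV) hcard
  set c₁ : ((G.contract e₀).E × Bool) := (a.1, !a.2) with hc₁def
  set c₂ : ((G.contract e₀).E × Bool) := (b.1, !b.2) with hc₂def
  have hc12 : c₁ ≠ c₂ := by
    intro h
    apply hab
    rw [hc₁def, hc₂def, Prod.ext_iff] at h
    obtain ⟨h1, h2⟩ := h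
    have h3 : a.2 = b.2 := by
      cases ha : a.2 <;> cases hb : b.2 <;> rw [ha, hb] at h2 <;> revert h2 <;> simp
    exact Prod.ext h1 h3
  set ρ' : Equiv.Perm ((G.contract e₀).E × Bool) := (Equiv.swap a b).trans ρbase
    with hρ'def
  have hrotbase : (G.contract e₀).IsRotation ρbase := by
    intro d
    rw [G.contract_dartV e₀ (ρbase d), G.contract_dartV e₀ d]
    have hval : ((ρbase d).1.1, (ρbase d).2) = ρ (d.1.1, d.2) :=
      congrArg Subtype.val (hρbase_apply d)
    rw [hval]
    exact congrArg (G.contractEnd e₀) (hρ (d.1.1, d.2))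
  refine ⟨ρ', ?_, ?_⟩
  · intro d
    rw [hρ'def]
    show (G.contract e₀).dartV (ρbase (Equiv.swap a b d)) = (G.contract e₀).dartV d
    rw [hrotbase]
    exact swap_map_eq ((G.contract e₀).dartV) hVab d
  · -- face count is 2
    have hop_swap : ∀ x : ((G.contract e₀).E × Bool),
        Equiv.swap a b (x.1, !x.2) = ((Equiv.swap c₁ c₂ x).1, !(Equiv.swap c₁ c₂ x).2) := by
      intro x
      rcases eq_or_ne x c₁ with hx | hx
      · rw [hx, Equiv.swap_apply_left, hc₁def, hc₂def]
        simp
      · rcases eq_or_ne x c₂ with hx2 | hx2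
        · rw [hx2, Equiv.swap_apply_right, hc₁def, hc₂def]
          simp
        · rw [Equiv.swap_apply_of_ne_of_ne hx hx2]
          have h1 : (x.1, !x.2) ≠ a := by
            intro h
            apply hx
            rw [hc₁def, ← h]
            simp
          have h2 : (x.1, !x.2) ≠ b := by
            intro h
            apply hx2
            rw [hc₂def, ← h]
            simp
          rw [Equiv.swap_apply_of_ne_of_ne h1 h2]
    have hfun : (fun x : ((G.contract e₀).E × Bool) => ρ' (x.1, !x.2)) =
        (fun x => πE (Equiv.swap c₁ c₂ x)) := by
      funext x
      rw [hρ'def, hπEdef]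
      show ρbase (Equiv.swap a b (x.1, !x.2)) = ρbase (opD (Equiv.swap c₁ c₂ x))
      rw [hop_swap x]
      rfl
    have hnf : (G.contract e₀).numFaces ρ' =
        Nat.card (Quot (frel (fun x => πE (Equiv.swap c₁ c₂ x)))) := by
      show Nat.card (Quot (frel (fun x : ((G.contract e₀).E × Bool) => ρ' (x.1, !x.2)))) = _
      rw [hfun]
    rw [hnf]
    exact card_quot_swap_trans πE hone'' hc12

end Construction

section Main

variable (G : Multigraph) (e₀ : G.E)

lemma contract_upperEmbeddable (hne : (G.ends e₀).1 ≠ (G.ends e₀).2)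
    (hU : G.UpperEmbeddable) : (G.contract e₀).UpperEmbeddable := by
  classical
  haveI hVne : Nonempty G.V := ⟨(G.ends e₀).1⟩
  haveI hEne : Nonempty G.E := ⟨e₀⟩
  have hVne' : Nonempty (G.contract e₀).V := ⟨⟨(G.ends e₀).1, Or.inl rfl⟩⟩
  have hβ' : (G.contract e₀).betti = G.betti := G.betti_contract e₀ hne
  have hle : (G.contract e₀).maxGenus ≤ (G.contract e₀).betti / 2 :=
    maxGenus_le_betti_div_two _ hVne'
  by_cases h0 : G.betti / 2 = 0
  · show (G.contract e₀).maxGenus = (G.contract e₀).betti / 2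
    have h1 : (G.contract e₀).betti / 2 = 0 := by rw [hβ']; exact h0
    rw [h1]
    rw [h1] at hle
    exact Nat.le_zero.mp hle
  · have hg1 : 1 ≤ G.betti / 2 := Nat.pos_of_ne_zero h0
    have hUg : sSup G.genusSet = G.betti / 2 := hU
    have hSne : G.genusSet.Nonempty := by
      by_contra h
      rw [Set.not_nonempty_iff_eq_empty.mp h, csSup_empty] at hUg
      simp only [Nat.bot_eq_zero] at hUg
      exact h0 hUg.symm
    have hmem : G.betti / 2 ∈ G.genusSet := hUg ▸ Nat.sSup_mem hSne G.genusSet_bddAbove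
    obtain ⟨ρ, hρrot, heq⟩ := hmem
    have hV1 : 1 ≤ Fintype.card G.V := Fintype.card_pos
    have hE1 : 1 ≤ Fintype.card G.E := Fintype.card_pos
    have hF1 : 1 ≤ G.numFaces ρ := G.numFaces_pos ρ hEne
    have hbetti : G.betti = Fintype.card G.E + 1 - Fintype.card G.V := rfl
    have hEV : Fintype.card G.V + 1 ≤ Fintype.card G.E := by omega
    have hconstr : ∃ ρ' : Equiv.Perm ((G.contract e₀).E × Bool),
        (G.contract e₀).IsRotation ρ' ∧ (G.contract e₀).numFaces ρ' = G.numFaces ρ := by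
      by_cases hdeg : ρ (e₀, true) = (e₀, true) ∧ ρ (e₀, false) = (e₀, false)
      · -- degenerate case
        set φf : G.E × Bool → G.E × Bool := fun x => ρ (x.1, !x.2) with hφfdef
        have hNFq : G.numFaces ρ = Nat.card (Quot (frel φf)) := rfl
        -- soundness of the bad-class indicator
        have hsound : ∀ x y : G.E × Bool, frel φf x y → ((x.1 = e₀) = (y.1 = e₀)) := by
          rintro x y (hxy : y = φf x)
          subst hxy
          apply propext
          constructor
          · intro hx
            rcases (show x = (e₀, true) ∨ x = (e₀, false) by
                rcases x with ⟨e, bb⟩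
                rw [show e = e₀ from hx]
                cases bb
                · right; rfl
                · left; rfl) with h | h
            · rw [h]
              show (ρ ((e₀ : G.E), !(true : Bool))).1 = e₀
              have : ((e₀ : G.E), !(true : Bool)) = ((e₀ : G.E), false) := rfl
              rw [this, hdeg.2]
            · rw [h]
              show (ρ ((e₀ : G.E), !(false : Bool))).1 = e₀
              have : ((e₀ : G.E), !(false : Bool)) = ((e₀ : G.E), true) := rfl
              rw [this, hdeg.1]
          · intro hy
            by_contra hx
            rcases (show φf x = (e₀, true) ∨ φf x = (e₀, false) by
                rcases hφ : φf x with ⟨e, bb⟩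
                rw [hφ] at hy
                rw [show e = e₀ from hy]
                cases bb
                · right; rfl
                · left; rfl) with h | h
            · have h2 : φf x = φf ((e₀ : G.E), false) := by
                rw [h]
                show ((e₀ : G.E), true) = ρ ((e₀ : G.E), !(false : Bool))
                rw [show ((e₀ : G.E), !(false : Bool)) = ((e₀:G.E), true) from rfl, hdeg.1]
              have h3 : x = ((e₀ : G.E), false) := by
                have h4 : (x.1, !x.2) = ((e₀ : G.E), !(false:Bool)) := ρ.injective h2
                rw [Prod.ext_iff] at h4 ⊢
                refine ⟨h4.1, ?_⟩
                have := h4.2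
                cases hb : x.2 <;> rw [hb] at this <;> simp_all
              exact hx (by rw [h3])
            · have h2 : φf x = φf ((e₀ : G.E), true) := by
                rw [h]
                show ((e₀ : G.E), false) = ρ ((e₀ : G.E), !(true : Bool))
                rw [show ((e₀ : G.E), !(true : Bool)) = ((e₀:G.E), false) from rfl, hdeg.2]
              have h3 : x = ((e₀ : G.E), true) := by
                have h4 : (x.1, !x.2) = ((e₀ : G.E), !(true:Bool)) := ρ.injective h2
                rw [Prod.ext_iff] at h4 ⊢
                refine ⟨h4.1, ?_⟩
                have := h4.2
                cases hb : x.2 <;> rw [hb] at this <;> simp_all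
              exact hx (by rw [h3])
        set fP : Quot (frel φf) → Prop :=
          Quot.lift (fun z : G.E × Bool => z.1 = e₀) hsound with hfPdef
        have hfP_mk : ∀ z : G.E × Bool, fP (Quot.mk _ z) = (z.1 = e₀) := fun z => rfl
        have hmkne : ∀ z : G.E × Bool, z.1 ≠ e₀ →
            Quot.mk (frel φf) z ≠ Quot.mk (frel φf) ((e₀ : G.E), true) := by
          intro z hz h
          apply hz
          have := congrArg fP h
          rw [hfP_mk, hfP_mk] at this
          rw [this]
        -- F ≥ 2
        obtain ⟨e₁, he₁⟩ : ∃ e : G.E, e ≠ e₀ := by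
          by_contra hcon
          push_neg at hcon
          have : Fintype.card G.E ≤ 1 :=
            Fintype.card_le_one_iff.mpr (fun x y => (hcon x).trans (hcon y).symm)
          omega
        have hF2 : 2 ≤ G.numFaces ρ := by
          rw [hNFq]
          haveI : Finite (Quot (frel φf)) :=
            Finite.of_surjective (Quot.mk _) (fun q => Quot.exists_rep q)
          have hnt : Nontrivial (Quot (frel φf)) :=
            ⟨⟨_, _, hmkne (e₁, true) he₁⟩⟩
          letI := Fintype.ofFinite (Quot (frel φf))
          rw [Nat.card_eq_fintype_card]
          exact Fintype.one_lt_card_iff_nontrivial.mpr hnt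
        have hF2' : G.numFaces ρ = 2 := by omega
        have hcard2 : Nat.card (Quot (frel φf)) = 2 := by rw [← hNFq]; exact hF2'
        have hone : ∀ x y : G.E × Bool, x.1 ≠ e₀ → y.1 ≠ e₀ →
            EqvGen (frel φf) x y := by
          intro x y hx hy
          apply Quot.eqvGen_exact
          exact eq_of_card_two hcard2 (hmkne x hx) (hmkne y hy)
        have hcard : Fintype.card (G.contract e₀).V <
            Fintype.card ((G.contract e₀).E × Bool) := by
          rw [Fintype.card_prod, Fintype.card_bool, G.card_contract_V e₀ hne,
            G.card_contract_E e₀]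
          omega
        obtain ⟨ρ', h1, h2⟩ := G.contract_rotation_deg e₀ ρ hρrot hdeg hone hcard
        exact ⟨ρ', h1, by rw [h2, hF2']⟩
      · exact G.contract_rotation_nondeg e₀ hne ρ hρrot hdeg
    obtain ⟨ρ', hrot', hF'⟩ := hconstr
    have hmem' : G.betti / 2 ∈ (G.contract e₀).genusSet := by
      refine ⟨ρ', hrot', ?_⟩
      rw [G.card_contract_V e₀ hne, G.card_contract_E e₀, hF']
      omega
    have hge : G.betti / 2 ≤ (G.contract e₀).maxGenus :=
      le_csSup (genusSet_bddAbove _) hmem'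
    show (G.contract e₀).maxGenus = (G.contract e₀).betti / 2
    rw [hβ']
    rw [hβ'] at hle
    exact le_antisymm hle hge

end Main

section IsomTransport

variable {H X : Multigraph}

/-- orientation-flip marker of an isomorphism on each edge -/
noncomputable def Isom.flip (i : Isom H X) (e : H.E) : Bool :=
  @ite _ (X.ends (i.eEquiv e) = (i.vEquiv (H.ends e).1, i.vEquiv (H.ends e).2))
    (Classical.propDecidable _) false true

lemma Isom.flip_spec (i : Isom H X) (e : H.E) :
    (i.flip e = false ∧ X.ends (i.eEquiv e) =
      (i.vEquiv (H.ends e).1, i.vEquiv (H.ends e).2)) ∨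
    (i.flip e = true ∧ X.ends (i.eEquiv e) =
      (i.vEquiv (H.ends e).2, i.vEquiv (H.ends e).1)) := by
  unfold Isom.flip
  split_ifs with h
  · exact Or.inl ⟨rfl, h⟩
  · exact Or.inr ⟨rfl, (i.ends_eq e).resolve_left h⟩

/-- the induced equivalence on darts -/
noncomputable def Isom.dartEquiv (i : Isom H X) : (H.E × Bool) ≃ (X.E × Bool) where
  toFun d := (i.eEquiv d.1, xor (i.flip d.1) d.2)
  invFun d := (i.eEquiv.symm d.1, xor (i.flip (i.eEquiv.symm d.1)) d.2)
  left_inv := by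
    rintro ⟨e, b⟩
    simp only [Equiv.symm_apply_apply]
    rw [← Bool.xor_assoc, Bool.xor_self, Bool.false_xor]
  right_inv := by
    rintro ⟨f, b⟩
    simp only [Equiv.apply_symm_apply]
    rw [← Bool.xor_assoc, Bool.xor_self, Bool.false_xor]

lemma Isom.dartV_dartEquiv (i : Isom H X) (d : H.E × Bool) :
    X.dartV (i.dartEquiv d) = i.vEquiv (H.dartV d) := by
  rcases d with ⟨e, b⟩
  rcases i.flip_spec e with ⟨hf, hends⟩ | ⟨hf, hends⟩ <;>
    cases b <;>
      simp [Isom.dartEquiv, hf, dartV, hends]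

lemma Isom.dartEquiv_op (i : Isom H X) (d : H.E × Bool) :
    i.dartEquiv (d.1, !d.2) = ((i.dartEquiv d).1, !(i.dartEquiv d).2) := by
  rcases d with ⟨e, b⟩
  show (i.eEquiv e, xor (i.flip e) (!b)) = (i.eEquiv e, !(xor (i.flip e) b))
  cases hb : i.flip e <;> cases b <;> rfl

lemma Isom.genusSet_sub (i : Isom H X) : X.genusSet ⊆ H.genusSet := by
  rintro g ⟨ρ, hrot, heq⟩
  refine ⟨(i.dartEquiv.trans ρ).trans i.dartEquiv.symm, ?_, ?_⟩
  · intro d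
    have hkey : ∀ z, i.vEquiv (H.dartV (i.dartEquiv.symm z)) = X.dartV z := by
      intro z
      rw [← i.dartV_dartEquiv (i.dartEquiv.symm z), Equiv.apply_symm_apply]
    apply i.vEquiv.injective
    show i.vEquiv (H.dartV (i.dartEquiv.symm (ρ (i.dartEquiv d)))) = _
    rw [hkey, hrot, i.dartV_dartEquiv]
  · have hV : Fintype.card H.V = Fintype.card X.V := Fintype.card_congr i.vEquiv
    have hE : Fintype.card H.E = Fintype.card X.E := Fintype.card_congr i.eEquiv
    have hNF : H.numFaces ((i.dartEquiv.trans ρ).trans i.dartEquiv.symm) =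
        X.numFaces ρ := by
      apply Nat.card_congr
      apply Quot.congr i.dartEquiv
      intro a b
      show (b = i.dartEquiv.symm (ρ (i.dartEquiv (a.1, !a.2)))) ↔
        (i.dartEquiv b = ρ ((i.dartEquiv a).1, !(i.dartEquiv a).2))
      rw [i.dartEquiv_op a]
      constructor
      · intro h
        rw [h, Equiv.apply_symm_apply]
      · intro h
        rw [← h, Equiv.symm_apply_apply]
    rw [hV, hE, hNF]
    exact heq

/-- inverse isomorphism -/
def Isom.symm (i : Isom H X) : Isom X H where
  vEquiv := i.vEquiv.symm
  eEquiv := i.eEquiv.symm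
  ends_eq := by
    intro f
    rcases i.ends_eq (i.eEquiv.symm f) with h | h
    · left
      rw [Equiv.apply_symm_apply] at h
      rw [h]
      simp
    · right
      rw [Equiv.apply_symm_apply] at h
      rw [h]
      simp

lemma Isom.upperEmbeddable_transfer (i : Isom H X) (hX : X.UpperEmbeddable) :
    H.UpperEmbeddable := by
  have h1 : H.genusSet = X.genusSet :=
    le_antisymm (Isom.genusSet_sub i.symm) (Isom.genusSet_sub i)
  have h2 : H.betti = X.betti := by
    unfold betti
    rw [Fintype.card_congr i.vEquiv, Fintype.card_congr i.eEquiv]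
  show H.maxGenus = H.betti / 2
  rw [maxGenus_def, h1, h2, ← maxGenus_def]
  exact hX

end IsomTransport

end Multigraph

/-- a weak minor of an upper embeddable connected graph is
upper embeddable. -/
theorem upperEmbeddable_of_isWeakMinor (G : Multigraph) (hG : G.Connected)
    (hU : G.UpperEmbeddable) (H : Multigraph) (h : Multigraph.IsWeakMinor H G) :
    H.UpperEmbeddable := by
  obtain ⟨X, hchain, ⟨iso⟩⟩ := h
  have hX : X.UpperEmbeddable := by
    clear iso
    induction hchain with
    | refl => exact hU
    | tail hsteps hstep ih =>
        obtain ⟨e₀, hne, ⟨iso2⟩⟩ := hstep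
        exact Multigraph.Isom.upperEmbeddable_transfer iso2
          (Multigraph.contract_upperEmbeddable _ e₀ hne ih)
  exact Multigraph.Isom.upperEmbeddable_transfer iso hX
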